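/- Every M*₂,₂-circuit is 2-connected. -/

import Mathlib

open scoped Classical

/-- The set of vertices incident to some edge in `F`. -/
def edgeVerts {V : Type*} (F : Set (Sym2 V)) : Set V := {v | ∃ e ∈ F, v ∈ e}

/-- Independence in the simple (2,2)-sparse matroid. -/
def Sparse22 {V : Type*} (F : Set (Sym2 V)) : Prop :=
  ∀ F' ⊆ F, F'.Nonempty →
    ((F'.ncard : ℤ) ≤ 2 * (edgeVerts F').ncard - 2 ∧
      (F'.ncard = 2 → (F'.ncard : ℤ) < 2 * (edgeVerts F').ncard - 2))

/-- `G` is an `M*₂,₂`-circuit. -/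
def M22Circuit {V : Type*} [Fintype V] (G : SimpleGraph V) : Prop :=
  (G.edgeSet.ncard : ℤ) = 2 * Fintype.card V - 1 ∧
  (∀ F ⊂ G.edgeSet, Sparse22 F) ∧
  ¬ Sparse22 G.edgeSet

/-- `G` is 2-connected: at least 3 vertices, connected, and deleting any single vertex
leaves a connected graph. -/
def TwoConnected {V : Type*} [Fintype V] (G : SimpleGraph V) : Prop :=
  3 ≤ Fintype.card V ∧ G.Connected ∧ ∀ v : V, (G.induce {w : V | w ≠ v}).Connected

section Aux

variable {V : Type*}

lemma edgeVerts_mono {F F' : Set (Sym2 V)} (h : F ⊆ F') : edgeVerts F ⊆ edgeVerts F' := by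
  rintro v ⟨e, he, hv⟩; exact ⟨e, h he, hv⟩

lemma edgeVerts_subset_of_forall {F : Set (Sym2 V)} {S : Set V}
    (h : ∀ e ∈ F, ∀ x ∈ e, x ∈ S) : edgeVerts F ⊆ S := by
  rintro v ⟨e, he, hv⟩; exact h e he v hv

variable [Fintype V] {G : SimpleGraph V}

lemma sparse_bound (hG : M22Circuit G) {F : Set (Sym2 V)} (hF : F ⊂ G.edgeSet)
    (hne : F.Nonempty) : (F.ncard : ℤ) ≤ 2 * (edgeVerts F).ncard - 2 :=
  (hG.2.1 F hF F subset_rfl hne).1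

lemma edgeVerts_ncard_le (F : Set (Sym2 V)) : (edgeVerts F).ncard ≤ Fintype.card V := by
  have := Set.ncard_le_ncard (Set.subset_univ (edgeVerts F)) (Set.toFinite _)
  rwa [Set.ncard_univ, Nat.card_eq_fintype_card] at this

lemma m22_card_ge_three (hG : M22Circuit G) : 3 ≤ Fintype.card V := by
  by_contra h
  push_neg at h
  have hc : Fintype.card V = 0 ∨ Fintype.card V = 1 ∨ Fintype.card V = 2 := by omega
  rcases hc with h | h | h
  · have h1 := hG.1
    rw [h] at h1
    omega
  · have h1 := hG.1
    rw [h] at h1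
    have hcard : G.edgeSet.ncard = 1 := by push_cast at h1; omega
    obtain ⟨e, he⟩ := Set.nonempty_of_ncard_ne_zero (by omega : G.edgeSet.ncard ≠ 0)
    induction e using Sym2.ind with
    | _ a b =>
      have hadj : G.Adj a b := he
      have : Subsingleton V := Fintype.card_le_one_iff_subsingleton.mp (by omega)
      exact hadj.ne (Subsingleton.elim a b)
  · have h1 := hG.1
    rw [h] at h1
    have hcard : G.edgeSet.ncard = 3 := by push_cast at h1; omega
    obtain ⟨F, hFsub, hFcard⟩ := Set.exists_subset_card_eq (by omega : 2 ≤ G.edgeSet.ncard)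
    have hFss : F ⊂ G.edgeSet := by
      refine hFsub.ssubset_of_ne ?_
      intro heq; rw [heq] at hFcard; omega
    have hFne : F.Nonempty := Set.nonempty_of_ncard_ne_zero (by omega)
    have := (hG.2.1 F hFss F subset_rfl hFne).2 hFcard
    have hle := edgeVerts_ncard_le F
    rw [h, hFcard] at *
    omega

lemma m22_edgeSet_ncard (hG : M22Circuit G) :
    G.edgeSet.ncard = 2 * Fintype.card V - 1 := by
  have h1 := hG.1
  have h3 := m22_card_ge_three hG
  omega

/-- Counting contradiction: the edge set cannot split into two nonempty disjoint parts
whose vertex sets are small. -/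
lemma m22_counting (hG : M22Circuit G) {E₁ E₂ : Set (Sym2 V)}
    (hu : G.edgeSet = E₁ ∪ E₂) (hd : Disjoint E₁ E₂)
    (h1 : E₁.Nonempty) (h2 : E₂.Nonempty)
    (hv : (edgeVerts E₁).ncard + (edgeVerts E₂).ncard ≤ Fintype.card V + 1) : False := by
  have hE1 : E₁ ⊂ G.edgeSet := by
    rw [hu]
    refine Set.ssubset_iff_of_subset Set.subset_union_left |>.mpr ?_
    obtain ⟨e, he⟩ := h2
    exact ⟨e, Or.inr he, fun hmem => Set.disjoint_left.mp hd hmem he⟩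
  have hE2 : E₂ ⊂ G.edgeSet := by
    rw [hu]
    refine Set.ssubset_iff_of_subset Set.subset_union_right |>.mpr ?_
    obtain ⟨e, he⟩ := h1
    exact ⟨e, Or.inl he, fun hmem => Set.disjoint_left.mp hd he hmem⟩
  have b1 := sparse_bound hG hE1 h1
  have b2 := sparse_bound hG hE2 h2
  have hsum : G.edgeSet.ncard = E₁.ncard + E₂.ncard := by
    rw [hu, Set.ncard_union_eq hd (Set.toFinite _) (Set.toFinite _)]
  have hcard := m22_edgeSet_ncard hG
  have h3 := m22_card_ge_three hG
  omega

lemma m22_edgeVerts_univ (hG : M22Circuit G) :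
    edgeVerts G.edgeSet = Set.univ := by
  have h3 := m22_card_ge_three hG
  have hcard := m22_edgeSet_ncard hG
  obtain ⟨e, he⟩ := Set.nonempty_of_ncard_ne_zero (by omega : G.edgeSet.ncard ≠ 0)
  have hF : G.edgeSet \ {e} ⊂ G.edgeSet := Set.sdiff_singleton_ssubset.mpr he
  have hFcard : (G.edgeSet \ {e}).ncard = G.edgeSet.ncard - 1 :=
    Set.ncard_diff_singleton_of_mem he
  have hFne : (G.edgeSet \ {e}).Nonempty := Set.nonempty_of_ncard_ne_zero (by omega)
  have hb := sparse_bound hG hF hFne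
  have hle := edgeVerts_ncard_le (G.edgeSet \ {e})
  have hk : Fintype.card V ≤ (edgeVerts (G.edgeSet \ {e})).ncard := by omega
  have heq : edgeVerts (G.edgeSet \ {e}) = Set.univ := by
    refine Set.eq_of_subset_of_ncard_le (Set.subset_univ _) ?_ (Set.toFinite _)
    rwa [Set.ncard_univ, Nat.card_eq_fintype_card]
  apply Set.eq_univ_of_univ_subset
  rw [← heq]
  exact edgeVerts_mono Set.diff_subset

lemma m22_exists_edge (hG : M22Circuit G) (v : V) : ∃ e ∈ G.edgeSet, v ∈ e := by
  have := m22_edgeVerts_univ hG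
  have hv : v ∈ edgeVerts G.edgeSet := this ▸ Set.mem_univ v
  exact hv

/-- The key partition lemma: if every edge lies entirely in `S₁` or entirely in `S₂`,
with witnesses on each side, and `|S₁| + |S₂| ≤ n + 1`, contradiction. -/
lemma m22_partition (hG : M22Circuit G) (S₁ S₂ : Set V)
    (hedge : ∀ e ∈ G.edgeSet, (∀ x ∈ e, x ∈ S₁) ∨ (∀ x ∈ e, x ∈ S₂))
    (hn : S₁.ncard + S₂.ncard ≤ Fintype.card V + 1)
    (h1 : ∃ e ∈ G.edgeSet, ∀ x ∈ e, x ∈ S₁)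
    (h2 : ∃ e ∈ G.edgeSet, ∃ x ∈ e, x ∉ S₁) : False := by
  set E₁ : Set (Sym2 V) := {e ∈ G.edgeSet | ∀ x ∈ e, x ∈ S₁} with hE₁
  set E₂ : Set (Sym2 V) := G.edgeSet \ E₁ with hE₂
  have hu : G.edgeSet = E₁ ∪ E₂ := by
    rw [hE₂, Set.union_diff_cancel (by rw [hE₁]; exact Set.sep_subset _ _)]
  have hd : Disjoint E₁ E₂ := Set.disjoint_left.mpr (fun e h1 h2 => h2.2 h1)
  have hne1 : E₁.Nonempty := by
    obtain ⟨e, he, hall⟩ := h1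
    exact ⟨e, he, hall⟩
  have hne2 : E₂.Nonempty := by
    obtain ⟨e, he, x, hx, hxS⟩ := h2
    exact ⟨e, he, fun hmem => hxS (hmem.2 x hx)⟩
  have hv1 : edgeVerts E₁ ⊆ S₁ := edgeVerts_subset_of_forall (fun e he => he.2)
  have hv2 : edgeVerts E₂ ⊆ S₂ := by
    refine edgeVerts_subset_of_forall (fun e he => ?_)
    rcases hedge e he.1 with h | h
    · exact absurd ⟨he.1, h⟩ he.2
    · exact h
  refine m22_counting hG hu hd hne1 hne2 ?_
  have c1 := Set.ncard_le_ncard hv1 (Set.toFinite _)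
  have c2 := Set.ncard_le_ncard hv2 (Set.toFinite _)
  omega

end Aux

/-- Every `M*₂,₂`-circuit is 2-connected. -/
theorem m22Circuit_twoConnected {V : Type*} [Fintype V] (G : SimpleGraph V)
    (hG : M22Circuit G) : TwoConnected G := by
  have h3 := m22_card_ge_three hG
  have hNE : Nonempty V := Fintype.card_pos_iff.mp (by omega)
  refine ⟨h3, ?_, ?_⟩
  · -- connectedness
    rw [SimpleGraph.connected_iff]
    refine ⟨fun u w => ?_, hNE⟩
    by_contra hreach
    set A : Set V := {x | G.Reachable u x} with hA
    have hclass : ∀ a b, G.Adj a b → a ∈ A → b ∈ A := by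
      intro a b hab ha
      exact ha.trans hab.reachable
    have hedge : ∀ e ∈ G.edgeSet, (∀ x ∈ e, x ∈ A) ∨ (∀ x ∈ e, x ∈ Aᶜ) := by
      intro e he
      induction e using Sym2.ind with
      | _ a b =>
        have hadj : G.Adj a b := he
        by_cases ha : a ∈ A
        · left
          intro x hx
          rcases Sym2.mem_iff.mp hx with rfl | rfl
          · exact ha
          · exact hclass a x hadj ha
        · right
          intro x hx
          rcases Sym2.mem_iff.mp hx with rfl | rfl
          · exact ha
          · exact fun hb => ha (hclass x a hadj.symm hb)
    refine m22_partition hG A Aᶜ hedge ?_ ?_ ?_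
    · rw [Set.ncard_add_ncard_compl A (Set.toFinite _) (Set.toFinite _),
        Nat.card_eq_fintype_card]
      omega
    · obtain ⟨e, he, hue⟩ := m22_exists_edge hG u
      refine ⟨e, he, ?_⟩
      rcases hedge e he with h | h
      · exact h
      · exact absurd (SimpleGraph.Reachable.refl u) (h u hue)
    · obtain ⟨e, he, hwe⟩ := m22_exists_edge hG w
      exact ⟨e, he, w, hwe, hreach⟩
  · -- 2-connectedness
    intro v
    set H := G.induce {w : V | w ≠ v} with hH
    rw [SimpleGraph.connected_iff]
    constructor
    · rintro u w
      by_contra hreach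
      set S₁ : Set V := {x | x = v ∨ ∃ h : x ≠ v, H.Reachable u ⟨x, h⟩} with hS₁
      set S₂ : Set V := S₁ᶜ ∪ {v} with hS₂
      have hvS₁ : v ∈ S₁ := Or.inl rfl
      have hstep : ∀ a b (ha : a ≠ v) (hb : b ≠ v), G.Adj a b →
          H.Reachable u ⟨a, ha⟩ → H.Reachable u ⟨b, hb⟩ := by
        intro a b ha hb hab hr
        refine hr.trans (SimpleGraph.Adj.reachable ?_)
        exact hab
      have hedge : ∀ e ∈ G.edgeSet, (∀ x ∈ e, x ∈ S₁) ∨ (∀ x ∈ e, x ∈ S₂) := by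
        intro e he
        induction e using Sym2.ind with
        | _ a b =>
          have hadj : G.Adj a b := he
          have hmem : ∀ x, x ∈ s(a, b) → x = a ∨ x = b := fun x hx => Sym2.mem_iff.mp hx
          by_cases ha : a ∈ S₁
          · by_cases hb : b ∈ S₁
            · left; intro x hx
              rcases hmem x hx with rfl | rfl
              · exact ha
              · exact hb
            · -- b ∉ S₁; then a = v (else reachability transfers), so a ∈ S₂ too
              right
              have hbv : b ≠ v := fun hbv => hb (hbv ▸ hvS₁)
              have hav : a = v := by
                by_contra hav
                rcases ha with h | ⟨h, hr⟩
                · exact hav h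
                · exact hb (Or.inr ⟨hbv, hstep a b h hbv hadj hr⟩)
              intro x hx
              rcases hmem x hx with rfl | rfl
              · exact Or.inr hav
              · exact Or.inl hb
          · right
            intro x hx
            rcases hmem x hx with rfl | rfl
            · exact Or.inl ha
            · by_cases hx' : x ∈ S₁
              · -- then a ∈ S₁ unless x = v
                rcases hx' with h | ⟨h, hr⟩
                · exact Or.inr h
                · exfalso
                  have hav : a ≠ v := by
                    intro hav
                    exact ha (Or.inl hav)
                  exact ha (Or.inr ⟨hav, hstep x a h hav hadj.symm hr⟩)
              · exact Or.inl hx'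
      refine m22_partition hG S₁ S₂ hedge ?_ ?_ ?_
      · have hcompl := Set.ncard_add_ncard_compl S₁ (Set.toFinite _) (Set.toFinite _)
        rw [Nat.card_eq_fintype_card] at hcompl
        have hle : S₂.ncard ≤ S₁ᶜ.ncard + 1 := by
          have h' := Set.ncard_union_le S₁ᶜ ({v} : Set V)
          rw [← hS₂, Set.ncard_singleton] at h'
          exact h' 
        omega
      · obtain ⟨e, he, hue⟩ := m22_exists_edge hG (↑u : V)
        refine ⟨e, he, ?_⟩
        have huS₁ : (↑u : V) ∈ S₁ := by
          refine Or.inr ⟨u.2, ?_⟩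
          exact SimpleGraph.Reachable.refl u
        rcases hedge e he with h | h
        · exact h
        · exfalso
          rcases h (↑u) hue with h' | h'
          · exact h' huS₁
          · exact u.2 h'
      · obtain ⟨e, he, hwe⟩ := m22_exists_edge hG (↑w : V)
        refine ⟨e, he, ↑w, hwe, ?_⟩
        rintro (h | ⟨h, hr⟩)
        · exact w.2 h
        · exact hreach (by convert hr)
    · obtain ⟨x, hx⟩ := Fintype.exists_ne_of_one_lt_card (by omega) v
      exact ⟨⟨x, hx⟩⟩
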